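/- arXiv:2508.21299 — 9 statements merged into one kernel-verified Lean document; each statement's English description precedes it below -/
import Mathlib

section
/- Let n ≥ 1 and d ≥ 0 be integers, and let g : ℝⁿ → ℝⁿ be a map each of whose components is a polynomial in x₁,…,xₙ of degree at most d+1. Suppose that xᵀ g(x) = 0 for every x in the affine hyperplane H = {x ∈ ℝⁿ : Σᵢ xᵢ = 1}. Then there exists a matrix-valued map A : ℝⁿ → ℝ^{n×n} whose entries are polynomials of degree at most d, satisfying A(x)ᵀ = −A(x) for all x, such that g(x) = A(x) x for all x ∈ H. -/
open MvPolynomial Matrix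

lemma aux_euler_monomial (n : ℕ) (u : Fin n →₀ ℕ) (c : ℝ) :
    ∑ j, X j * pderiv j (monomial u c) = (u.degree) • monomial u c := by
  have h : ∀ j : Fin n, X j * pderiv j (monomial u c) = (u j) • monomial u c := by
    intro j
    rw [pderiv_monomial]
    rcases Nat.eq_zero_or_pos (u j) with h0 | h0
    · simp [h0]
    · rw [X, monomial_mul]
      have huu : Finsupp.single j 1 + (u - Finsupp.single j 1) = u := by
        rw [add_comm]
        exact tsub_add_cancel_of_le (by rw [Finsupp.single_le_iff]; exact h0)
      rw [huu, one_mul, smul_monomial]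
      congr 1
      simp [Nat.smul_one_eq_cast, mul_comm]
  rw [Finset.sum_congr rfl (fun j _ => h j), ← Finset.sum_smul]
  congr 1
  rw [Finsupp.degree]
  exact (Finset.sum_subset (Finset.subset_univ _)
    (by intro x _ hx; simpa using (Finsupp.notMem_support_iff.mp hx))).symm

lemma aux_euler (n m : ℕ) (p : MvPolynomial (Fin n) ℝ) (hp : p.IsHomogeneous m) :
    ∑ j, X j * pderiv j p = m • p := by
  conv_lhs => rw [p.as_sum]
  conv_rhs => rw [p.as_sum]
  simp only [map_sum, Finset.mul_sum, Finset.smul_sum]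
  rw [Finset.sum_comm]
  refine Finset.sum_congr rfl fun u hu => ?_
  rw [aux_euler_monomial]
  congr 1
  rw [Finsupp.degree_eq_weight_one]
  exact hp (Finsupp.mem_support_iff.mp hu)

lemma aux_pderiv_homog (n m : ℕ) (j : Fin n) (p : MvPolynomial (Fin n) ℝ)
    (hp : p.IsHomogeneous (m + 1)) : (pderiv j p).IsHomogeneous m := by
  rw [p.as_sum, map_sum]
  apply MvPolynomial.IsHomogeneous.sum
  intro u hu
  rw [pderiv_monomial]
  rcases Nat.eq_zero_or_pos (u j) with h0 | h0
  · simp only [h0, Nat.cast_zero, mul_zero, monomial_zero]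
    exact isHomogeneous_zero _ _ _
  · apply isHomogeneous_monomial
    have hle : Finsupp.single j 1 ≤ u := by rw [Finsupp.single_le_iff]; exact h0
    have : (Finsupp.weight (1 : Fin n → ℕ)) ((u - Finsupp.single j 1) + Finsupp.single j 1) =
        (Finsupp.weight (1 : Fin n → ℕ)) u := by rw [tsub_add_cancel_of_le hle]
    rw [map_add] at this
    have hd : (Finsupp.weight (1 : Fin n → ℕ)) u = m + 1 := hp (Finsupp.mem_support_iff.mp hu)
    have hs : (Finsupp.weight (1 : Fin n → ℕ)) (Finsupp.single j 1) = 1 := by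
      simp [Finsupp.weight_apply, Finsupp.sum_single_index]
    rw [Finsupp.degree_eq_weight_one]
    change (Finsupp.weight (1 : Fin n → ℕ)) (u - Finsupp.single j 1) = m
    omega

lemma aux_eval_smul (n m : ℕ) (p : MvPolynomial (Fin n) ℝ) (hp : p.IsHomogeneous m)
    (c : ℝ) (x : Fin n → ℝ) : eval (c • x) p = c ^ m * eval x p := by
  conv_lhs => rw [p.as_sum]
  conv_rhs => rw [p.as_sum]
  rw [map_sum, map_sum, Finset.mul_sum]
  refine Finset.sum_congr rfl fun u hu => ?_
  rw [eval_monomial, eval_monomial]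
  have hdeg : u.degree = m := by
    rw [Finsupp.degree_eq_weight_one]; exact hp (Finsupp.mem_support_iff.mp hu)
  have : (u.prod fun i e => (c • x) i ^ e) = c ^ m * u.prod fun i e => x i ^ e := by
    rw [Finsupp.prod, Finsupp.prod]
    have : ∀ i ∈ u.support, (c • x) i ^ u i = c ^ u i * x i ^ u i := by
      intro i _; rw [Pi.smul_apply, smul_eq_mul, mul_pow]
    rw [Finset.prod_congr rfl this, Finset.prod_mul_distrib, Finset.prod_pow_eq_pow_sum]
    rw [← Finsupp.degree_apply, hdeg]
  rw [this]; ring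


/-- **Theorem (main).** Let `n ≥ 1`, `d ≥ 0`, and let `g : ℝⁿ → ℝⁿ` have polynomial
components of degree at most `d+1`.  If `xᵀ g(x) = 0` for every `x` with `∑ᵢ xᵢ = 1`,
then there is a skew-symmetric polynomial matrix `A(x)` of degree at most `d`
with `g(x) = A(x) x` for all `x` in the hyperplane. -/
theorem replicator_skew_representation_on_hyperplane
    (n d : ℕ) (hn : 1 ≤ n)
    (g : Fin n → MvPolynomial (Fin n) ℝ)
    (hdeg : ∀ i, (g i).totalDegree ≤ d + 1)
    (hzero : ∀ x : Fin n → ℝ, ∑ i, x i = 1 → ∑ i, x i * eval x (g i) = 0) :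
    ∃ A : Matrix (Fin n) (Fin n) (MvPolynomial (Fin n) ℝ),
      (∀ i j, (A i j).totalDegree ≤ d) ∧
      (∀ x : Fin n → ℝ,
        (Matrix.of fun i j => eval x (A i j))ᵀ = -(Matrix.of fun i j => eval x (A i j))) ∧
      (∀ x : Fin n → ℝ, ∑ i, x i = 1 →
        ∀ i, eval x (g i) = ∑ j, eval x (A i j) * x j) := by
  classical
  set s : MvPolynomial (Fin n) ℝ := ∑ k, X k with hs_def
  have hs_hom : s.IsHomogeneous 1 :=
    IsHomogeneous.sum _ _ _ fun i _ => isHomogeneous_X _ _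
  have hs_eval : ∀ x : Fin n → ℝ, eval x s = ∑ k, x k := by
    intro x; simp [hs_def]
  set P : Fin n → MvPolynomial (Fin n) ℝ :=
    fun i => ∑ u ∈ (g i).support, monomial u (coeff u (g i)) * s ^ (d + 1 - u.degree)
    with hP_def
  have hP_hom : ∀ i, (P i).IsHomogeneous (d + 1) := by
    intro i
    apply IsHomogeneous.sum
    intro u hu
    have h1 : u.degree ≤ d + 1 := by
      have h2 := MvPolynomial.le_totalDegree hu
      have h3 : (u.sum fun _ e => e) = u.degree := rfl
      have h4 := hdeg i
      omega
    have h5 := (isHomogeneous_monomial (coeff u (g i)) (rfl : u.degree = u.degree)).mul (hs_hom.pow (d + 1 - u.degree))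
    have h6 : u.degree + 1 * (d + 1 - u.degree) = d + 1 := by omega
    rwa [h6] at h5
  have hP_eval : ∀ x : Fin n → ℝ, ∑ k, x k = 1 → ∀ i, eval x (P i) = eval x (g i) := by
    intro x hx i
    conv_rhs => rw [(g i).as_sum]
    rw [hP_def, map_sum, map_sum]
    refine Finset.sum_congr rfl fun u hu => ?_
    rw [_root_.map_mul, map_pow, hs_eval, hx, one_pow, mul_one]
  have hF : (∑ i, X i * P i : MvPolynomial (Fin n) ℝ) = 0 := by
    have hFhom : (∑ i, X i * P i : MvPolynomial (Fin n) ℝ).IsHomogeneous (d + 2) := by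
      apply IsHomogeneous.sum
      intro i _
      have := (isHomogeneous_X ℝ i).mul (hP_hom i)
      rwa [show 1 + (d + 1) = d + 2 by omega] at this
    have hFs : (∑ i, X i * P i : MvPolynomial (Fin n) ℝ) * s = 0 := by
      apply (hFhom.mul hs_hom).eq_zero_of_forall_eval_eq_zero
      intro x
      rw [_root_.map_mul, hs_eval]
      rcases eq_or_ne (∑ k, x k) 0 with h0 | h0
      · rw [h0, mul_zero]
      · set c : ℝ := ∑ k, x k with hc
        have hxy : x = c • ((c⁻¹ : ℝ) • x) := by
          rw [smul_smul, mul_inv_cancel₀ h0, one_smul]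
        set y : Fin n → ℝ := (c⁻¹ : ℝ) • x with hy
        have hy1 : ∑ k, y k = 1 := by
          simp only [hy, Pi.smul_apply, smul_eq_mul, ← Finset.mul_sum, ← hc]
          exact inv_mul_cancel₀ h0
        have hevy : eval y (∑ i, X i * P i : MvPolynomial (Fin n) ℝ) = 0 := by
          rw [map_sum]
          have : ∀ i : Fin n, eval y (X i * P i) = y i * eval y (g i) := by
            intro i; rw [_root_.map_mul, eval_X, hP_eval y hy1]
          rw [Finset.sum_congr rfl fun i _ => this i]
          exact hzero y hy1
        rw [hxy, aux_eval_smul n (d + 2) _ hFhom c y, hevy, mul_zero, zero_mul]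
    have hsne : s ≠ 0 := by
      intro h
      have := congrArg (eval fun _ : Fin n => (1 : ℝ)) h
      rw [hs_eval, map_zero] at this
      simp only [Finset.sum_const, Finset.card_univ, Fintype.card_fin, nsmul_eq_mul,
        mul_one] at this
      have : (n : ℝ) ≠ 0 := Nat.cast_ne_zero.mpr (by omega)
      simp_all
    exact (mul_eq_zero.mp hFs).resolve_right hsne
  have hpd : ∀ j, P j + ∑ i, X i * pderiv j (P i) = 0 := by
    intro j
    have h := congrArg (pderiv j) hF
    rw [map_sum, map_zero] at h
    have h2 : ∑ i, (pderiv j (X i) * P i + X i * pderiv j (P i)) = 0 := by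
      refine Eq.trans ?_ h
      exact Finset.sum_congr rfl fun i _ => (pderiv_mul).symm
    rw [Finset.sum_add_distrib] at h2
    have h3 : ∑ i, pderiv j (X i) * P i = P j := by
      rw [Finset.sum_eq_single j]
      · rw [pderiv_X_self, one_mul]
      · intro b _ hb; rw [pderiv_X_of_ne hb, zero_mul]
      · intro hj; exact absurd (Finset.mem_univ j) hj
    rwa [h3] at h2
  set A : Matrix (Fin n) (Fin n) (MvPolynomial (Fin n) ℝ) :=
    Matrix.of fun i j => C ((d + 2 : ℝ))⁻¹ * (pderiv j (P i) - pderiv i (P j)) with hA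
  have hAapp : ∀ i j, A i j = C ((d + 2 : ℝ))⁻¹ * (pderiv j (P i) - pderiv i (P j)) :=
    fun i j => rfl
  refine ⟨A, ?_, ?_, ?_⟩
  · intro i j
    rw [hAapp]
    have h1 := aux_pderiv_homog n d j (P i) (hP_hom i)
    have h2 := aux_pderiv_homog n d i (P j) (hP_hom j)
    exact ((h1.sub h2).C_mul _).totalDegree_le
  · intro x
    ext i j
    simp only [Matrix.transpose_apply, Matrix.neg_apply, Matrix.of_apply]
    rw [hAapp, hAapp, _root_.map_mul, _root_.map_mul, map_sub, map_sub, eval_C]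
    ring
  · intro x hx i
    have hd2 : ((d : ℝ) + 2) ≠ 0 := by positivity
    have heuler := congrArg (eval x) (aux_euler n (d + 1) (P i) (hP_hom i))
    rw [map_sum, map_nsmul, nsmul_eq_mul] at heuler
    simp only [_root_.map_mul, eval_X] at heuler
    have hpdi : eval x (P i) + ∑ j, x j * eval x (pderiv i (P j)) = 0 := by
      have h := congrArg (eval x) (hpd i)
      rw [map_zero] at h
      rw [← h, map_add]
      congr 1
      rw [map_sum]
      exact Finset.sum_congr rfl fun j _ => by rw [_root_.map_mul, eval_X]
    rw [← hP_eval x hx i]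
    have hterm : ∀ j : Fin n, eval x (A i j) * x j =
        ((d : ℝ) + 2)⁻¹ * (x j * eval x (pderiv j (P i)) - x j * eval x (pderiv i (P j))) := by
      intro j
      rw [hAapp, _root_.map_mul, map_sub, eval_C]
      ring
    rw [Finset.sum_congr rfl fun j _ => hterm j, ← Finset.mul_sum,
      Finset.sum_sub_distrib, heuler]
    have hE2 : ∑ j, x j * eval x (pderiv i (P j)) = -eval x (P i) := by linarith
    rw [hE2]
    push_cast
    field_simp
    ring
end

section
/- Let H ∈ ℝ^{n×n} be a constant matrix, and write S = (H + Hᵀ)/2 and Ω = (H − Hᵀ)/2. Define H'(x) = S x 𝟏ᵀ − 𝟏 xᵀ S + Ω, where 𝟏 ∈ ℝⁿ is the all-ones vector. Then H'(x) is skew-symmetric for every x, and for every x in the affine hyperplane {x ∈ ℝⁿ : Σᵢ xᵢ = 1} one has diag(x)(H'(x)x − (xᵀH'(x)x)𝟏) = diag(x)(Hx − (xᵀHx)𝟏); that is, H'(x) and H induce the same replicator vector field. -/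
open Matrix

/-- **Example 1.**  Given a constant matrix `H` with symmetric part `S` and
skew-symmetric part `Ω`, the matrix `H'(x) = S x 𝟏ᵀ − 𝟏 xᵀ S + Ω` is
skew-symmetric, and `H'` induces the same replicator vector field as `H`
on the hyperplane `{x : ∑ᵢ xᵢ = 1}`. -/
theorem skew_payoff_same_replicator_field
    (n : ℕ) (H : Matrix (Fin n) (Fin n) ℝ)
    (S Ω : Matrix (Fin n) (Fin n) ℝ)
    (hS : S = (1 / 2 : ℝ) • (H + Hᵀ))
    (hΩ : Ω = (1 / 2 : ℝ) • (H - Hᵀ))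
    (H' : (Fin n → ℝ) → Matrix (Fin n) (Fin n) ℝ)
    (hH' : ∀ x, H' x =
      vecMulVec (S *ᵥ x) (fun _ => 1) - vecMulVec (fun _ => 1) (x ᵥ* S) + Ω) :
    (∀ x, (H' x)ᵀ = -(H' x)) ∧
    (∀ x : Fin n → ℝ, ∑ i, x i = 1 →
      ∀ i, x i * ((H' x *ᵥ x) i - x ⬝ᵥ (H' x *ᵥ x))
         = x i * ((H *ᵥ x) i - x ⬝ᵥ (H *ᵥ x))) := by
  have hs : ∀ a b, S a b = S b a := by
    intro a b; rw [hS]; simp [Matrix.smul_apply, Matrix.add_apply]; ring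
  have hw : ∀ a b, Ω a b = -Ω b a := by
    intro a b; rw [hΩ]; simp [Matrix.smul_apply, Matrix.sub_apply]; ring
  have hH : H = S + Ω := by
    rw [hS, hΩ]; ext i j; simp [Matrix.smul_apply, Matrix.add_apply, Matrix.sub_apply]; ring
  constructor
  · intro x
    ext i j
    have h1 : ∀ (a : Fin n), (∑ k, x k * S k a) = ∑ k, S a k * x k := by
      intro a
      refine Finset.sum_congr rfl fun k _ => ?_
      rw [hs k a, mul_comm]
    simp only [hH', transpose_apply, Matrix.neg_apply, Matrix.sub_apply, Matrix.add_apply,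
      vecMulVec_apply, mulVec, vecMul, dotProduct]
    rw [h1, h1, hw j i]
    ring
  · intro x hx i
    have hmv : ∀ (a b : Fin n → ℝ) (i : Fin n),
        (vecMulVec a b *ᵥ x) i = a i * (b ⬝ᵥ x) := by
      intro a b i
      simp [mulVec, vecMulVec_apply, dotProduct, Finset.mul_sum, mul_assoc]
    have hone : (fun _ : Fin n => (1:ℝ)) ⬝ᵥ x = 1 := by simp [dotProduct, hx]
    have hxS : (x ᵥ* S) ⬝ᵥ x = x ⬝ᵥ (S *ᵥ x) := (dotProduct_mulVec x S x).symm
    set c := x ⬝ᵥ (S *ᵥ x) with hc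
    have key : ∀ i, (H' x *ᵥ x) i = (S *ᵥ x) i + (Ω *ᵥ x) i - c := by
      intro i
      rw [hH', Matrix.add_mulVec, Matrix.sub_mulVec]
      simp only [Pi.add_apply, Pi.sub_apply, hmv, hone, hxS]
      ring
    have hdotH' : x ⬝ᵥ (H' x *ᵥ x) = c + x ⬝ᵥ (Ω *ᵥ x) - c := by
      have : x ⬝ᵥ (H' x *ᵥ x) = ∑ j, x j * ((S *ᵥ x) j + (Ω *ᵥ x) j - c) := by
        simp [dotProduct, key]
      rw [this]
      simp only [mul_add, mul_sub, Finset.sum_add_distrib, Finset.sum_sub_distrib,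
        ← Finset.sum_mul, hx, one_mul]
      simp [dotProduct, hc]
    have hHmv : ∀ i, (H *ᵥ x) i = (S *ᵥ x) i + (Ω *ᵥ x) i := by
      intro i; rw [hH, Matrix.add_mulVec]; rfl
    have hdotH : x ⬝ᵥ (H *ᵥ x) = c + x ⬝ᵥ (Ω *ᵥ x) := by
      simp only [dotProduct, hHmv, mul_add, Finset.sum_add_distrib, hc]
    rw [key, hdotH', hHmv, hdotH]
    ring
end

section
/- Let d ≥ 0. The vector space Q^n_{(d+1)} of maps g : ℝⁿ → ℝⁿ with homogeneous polynomial components of degree d+1 satisfying xᵀ g(x) = 0 for all x ∈ ℝⁿ is spanned by the set V = { v_{ij}^α : |α| = d, 1 ≤ i < j ≤ n }, where v_{ij}^α(x) = x^{α+e_j} e_i − x^{α+e_i} e_j; here e_k denotes the k-th standard basis vector of ℝⁿ (and, in the exponent, the multi-index with a 1 in position k). -/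
open MvPolynomial

lemma fdeg_eq_sum {n : ℕ} (β : Fin n →₀ ℕ) : β.degree = ∑ k, β k := by
  rw [Finsupp.degree]
  exact Finset.sum_subset (Finset.subset_univ _)
    (fun x _ hx => Finsupp.notMem_support_iff.mp hx)

lemma single_le_of_ne {n : ℕ} {β : Fin n →₀ ℕ} {i : Fin n} (h : β i ≠ 0) :
    Finsupp.single i 1 ≤ β := by
  rwa [Finsupp.single_le_iff, Nat.one_le_iff_ne_zero]

lemma pair_mem_span {n d : ℕ} (β : Fin n →₀ ℕ) (hβ : ∑ k, β k = d + 2)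
    {i i₀ : Fin n} (hne : i ≠ i₀) (hi : β i ≠ 0) (hi₀ : β i₀ ≠ 0) :
    (Pi.single i (monomial (β - Finsupp.single i 1) (1:ℝ))
      - Pi.single i₀ (monomial (β - Finsupp.single i₀ 1) (1:ℝ))) ∈
      Submodule.span ℝ
      { v : Fin n → MvPolynomial (Fin n) ℝ |
        ∃ (α : Fin n →₀ ℕ) (a b : Fin n), (∑ k, α k) = d ∧ a < b ∧
          v = Pi.single a (monomial (α + Finsupp.single b 1) (1 : ℝ))
              - Pi.single b (monomial (α + Finsupp.single a 1) (1 : ℝ)) } := by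
  set α : Fin n →₀ ℕ := β - Finsupp.single i 1 - Finsupp.single i₀ 1 with hα
  have hle : Finsupp.single i 1 ≤ β := single_le_of_ne hi
  have hle₀' : Finsupp.single i₀ 1 ≤ β - Finsupp.single i 1 := by
    apply single_le_of_ne
    rw [Finsupp.tsub_apply, Finsupp.single_apply, if_neg (by simpa using hne)]
    simpa using hi₀
  have hle' : Finsupp.single i 1 ≤ β - Finsupp.single i₀ 1 := by
    apply single_le_of_ne
    rw [Finsupp.tsub_apply, Finsupp.single_apply, if_neg (by simpa using hne.symm)]
    simpa using hi
  have hc1 : α + Finsupp.single i₀ 1 = β - Finsupp.single i 1 :=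
    tsub_add_cancel_of_le hle₀'
  have hc2 : α + Finsupp.single i 1 = β - Finsupp.single i₀ 1 := by
    rw [hα, tsub_tsub, add_comm (Finsupp.single i 1), ← tsub_tsub]
    exact tsub_add_cancel_of_le hle'
  have hβeq : α + Finsupp.single i₀ 1 + Finsupp.single i 1 = β := by
    rw [hc1]; exact tsub_add_cancel_of_le hle
  have hαsum : ∑ k, α k = d := by
    have := congrArg (fun γ : Fin n →₀ ℕ => ∑ k, γ k) hβeq
    simp only [Finsupp.add_apply, Finset.sum_add_distrib, Finsupp.single_apply] at this
    rw [Finset.sum_ite_eq Finset.univ i₀ (fun _ => 1),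
      Finset.sum_ite_eq Finset.univ i (fun _ => 1)] at this
    simp only [Finset.mem_univ, if_pos] at this
    omega
  rcases lt_or_gt_of_ne hne with h | h
  · -- i < i₀ : element is v itself
    apply Submodule.subset_span
    exact ⟨α, i, i₀, hαsum, h, by rw [hc1, hc2]⟩
  · -- i₀ < i : element is -v
    have : (Pi.single i (monomial (β - Finsupp.single i 1) (1:ℝ))
      - Pi.single i₀ (monomial (β - Finsupp.single i₀ 1) (1:ℝ)))
      = -((Pi.single i₀ (monomial (α + Finsupp.single i 1) (1:ℝ))
          - Pi.single i (monomial (α + Finsupp.single i₀ 1) (1:ℝ)) : Fin n → MvPolynomial (Fin n) ℝ)) := by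
      rw [hc1, hc2, neg_sub]
    rw [this]
    exact Submodule.neg_mem _ (Submodule.subset_span ⟨α, i₀, i, hαsum, h, rfl⟩)

lemma slice_mem_span {n d : ℕ} (β : Fin n →₀ ℕ) (hβ : ∑ k, β k = d + 2)
    (c : Fin n → ℝ) (hc : ∀ i, c i ≠ 0 → β i ≠ 0) (hsum : ∑ i, c i = 0) :
    (fun i => (monomial (β - Finsupp.single i 1) (c i) : MvPolynomial (Fin n) ℝ)) ∈
      Submodule.span ℝ
      { v : Fin n → MvPolynomial (Fin n) ℝ |
        ∃ (α : Fin n →₀ ℕ) (a b : Fin n), (∑ k, α k) = d ∧ a < b ∧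
          v = Pi.single a (monomial (α + Finsupp.single b 1) (1 : ℝ))
              - Pi.single b (monomial (α + Finsupp.single a 1) (1 : ℝ)) } := by
  by_cases h0 : c = 0
  · have : (fun i => (monomial (β - Finsupp.single i 1) (c i) : MvPolynomial (Fin n) ℝ)) = 0 := by
      funext i; simp [h0]
    rw [this]; exact Submodule.zero_mem _
  · obtain ⟨i₀, hi₀⟩ := Function.ne_iff.mp h0
    simp only [Pi.zero_apply] at hi₀
    have hsum' : ∑ i ∈ Finset.univ.erase i₀, c i = - c i₀ := by
      have := Finset.add_sum_erase Finset.univ c (Finset.mem_univ i₀)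
      rw [hsum] at this; linarith
    have key : (fun i => (monomial (β - Finsupp.single i 1) (c i) : MvPolynomial (Fin n) ℝ))
        = ∑ i ∈ Finset.univ.erase i₀, c i •
            ((Pi.single i (monomial (β - Finsupp.single i 1) (1:ℝ))
             - Pi.single i₀ (monomial (β - Finsupp.single i₀ 1) (1:ℝ)) :
               Fin n → MvPolynomial (Fin n) ℝ)) := by
      have expand : (fun i => (monomial (β - Finsupp.single i 1) (c i) : MvPolynomial (Fin n) ℝ))
          = ∑ i, Pi.single i (monomial (β - Finsupp.single i 1) (c i) : MvPolynomial (Fin n) ℝ) :=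
        (Finset.univ_sum_single _).symm
      rw [expand, ← Finset.add_sum_erase Finset.univ _ (Finset.mem_univ i₀)]
      simp_rw [smul_sub]
      rw [Finset.sum_sub_distrib, ← Finset.sum_smul, hsum']
      have h1 : ∀ j : Fin n, Pi.single j (monomial (β - Finsupp.single j 1) (c j)
          : MvPolynomial (Fin n) ℝ)
          = c j • (Pi.single j (monomial (β - Finsupp.single j 1) (1:ℝ)) : Fin n → MvPolynomial (Fin n) ℝ) := by
        intro j
        rw [← Pi.single_smul, smul_monomial, smul_eq_mul, mul_one]
      simp_rw [h1]
      rw [neg_smul, sub_neg_eq_add, add_comm]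
    rw [key]
    refine Submodule.sum_mem _ (fun i hi => ?_)
    rcases eq_or_ne (c i) 0 with hci | hci
    · rw [hci, zero_smul]; exact Submodule.zero_mem _
    · exact Submodule.smul_mem _ _
        (pair_mem_span β hβ (Finset.ne_of_mem_erase hi) (hc i hci) (hc i₀ hi₀))

lemma sum_add_single {n : ℕ} (γ : Fin n →₀ ℕ) (i : Fin n) :
    ∑ k, ((γ + Finsupp.single i 1 : Fin n →₀ ℕ)) k = (∑ k, γ k) + 1 := by
  simp only [Finsupp.add_apply, Finset.sum_add_distrib, Finsupp.single_apply]
  rw [Finset.sum_ite_eq Finset.univ i (fun _ => 1)]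
  simp

lemma mul_eval_monomial {n : ℕ} (x : Fin n → ℝ) (i : Fin n) (γ : Fin n →₀ ℕ) :
    x i * eval x (monomial γ (1:ℝ)) = eval x (monomial (γ + Finsupp.single i 1) (1:ℝ)) := by
  have : (monomial (γ + Finsupp.single i 1) (1:ℝ)) = monomial γ (1:ℝ) * X i := by
    rw [X, monomial_mul, mul_one]
  rw [this, map_mul, eval_X, mul_comm]

noncomputable def Qmod (n d : ℕ) : Submodule ℝ (Fin n → MvPolynomial (Fin n) ℝ) where
  carrier := { g : Fin n → MvPolynomial (Fin n) ℝ |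
        (∀ i, (g i).IsHomogeneous (d + 1)) ∧
        ∀ x : Fin n → ℝ, ∑ i, x i * eval x (g i) = 0 }
  zero_mem' := ⟨fun _ => isHomogeneous_zero _ _ _, fun x => by simp⟩
  add_mem' := fun {a b} ha hb => ⟨fun i => (ha.1 i).add (hb.1 i), fun x => by
    simp only [Pi.add_apply, map_add, mul_add, Finset.sum_add_distrib, ha.2 x, hb.2 x, add_zero]⟩
  smul_mem' := fun r g hg => ⟨fun i => by
      have := (homogeneousSubmodule (Fin n) ℝ (d+1)).smul_mem r
        ((mem_homogeneousSubmodule _ _).mpr (hg.1 i))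
      simpa [mem_homogeneousSubmodule] using this,
    fun x => by
      simp only [Pi.smul_apply, smul_eq_C_mul, map_mul, eval_C, mul_left_comm]
      rw [← Finset.mul_sum, hg.2 x, mul_zero]⟩

lemma v_mem_Qmod {n d : ℕ} (α : Fin n →₀ ℕ) (i j : Fin n)
    (hα : ∑ k, α k = d) (hij : i < j) :
    (Pi.single i (monomial (α + Finsupp.single j 1) (1 : ℝ))
      - Pi.single j (monomial (α + Finsupp.single i 1) (1 : ℝ))
      : Fin n → MvPolynomial (Fin n) ℝ) ∈ Qmod n d := by
  have hdeg : ∀ k : Fin n, (α + Finsupp.single k 1).degree = d + 1 := by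
    intro k
    rw [fdeg_eq_sum, sum_add_single, hα]
  constructor
  · intro k
    simp only [Pi.sub_apply, Pi.single_apply]
    by_cases hki : k = i
    · subst hki
      rw [if_pos rfl, if_neg hij.ne, sub_zero]
      exact isHomogeneous_monomial _ (hdeg j)
    · by_cases hkj : k = j
      · subst hkj
        rw [if_neg hki, if_pos rfl, zero_sub]
        exact ((isHomogeneous_monomial (1:ℝ) (hdeg i)).neg)
      · rw [if_neg hki, if_neg hkj, sub_zero]
        exact isHomogeneous_zero _ _ _
  · intro x
    simp only [Pi.sub_apply, Pi.single_apply, map_sub, mul_sub, Finset.sum_sub_distrib,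
      apply_ite (eval x), map_zero, mul_ite, mul_zero]
    rw [Finset.sum_ite_eq' Finset.univ i, Finset.sum_ite_eq' Finset.univ j]
    simp only [Finset.mem_univ, if_pos]
    rw [mul_eval_monomial, mul_eval_monomial, add_right_comm, sub_self]

/-- **Lemma 2 (spanning set of `Q^n_{(d+1)}`).**  The space of maps `g : ℝⁿ → ℝⁿ`
with homogeneous polynomial components of degree `d+1` satisfying `xᵀ g(x) = 0`
for all `x ∈ ℝⁿ` is spanned by the vectors
`v_{ij}^α(x) = x^{α+e_j} e_i − x^{α+e_i} e_j` for `|α| = d` and `i < j`. -/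
theorem Q_spanned_by_v
    (n d : ℕ) :
    (Submodule.span ℝ
      { v : Fin n → MvPolynomial (Fin n) ℝ |
        ∃ (α : Fin n →₀ ℕ) (i j : Fin n), (∑ k, α k) = d ∧ i < j ∧
          v = Pi.single i (monomial (α + Finsupp.single j 1) (1 : ℝ))
              - Pi.single j (monomial (α + Finsupp.single i 1) (1 : ℝ)) } : Set _)
    = { g : Fin n → MvPolynomial (Fin n) ℝ |
        (∀ i, (g i).IsHomogeneous (d + 1)) ∧
        ∀ x : Fin n → ℝ, ∑ i, x i * eval x (g i) = 0 } := by
  apply Set.Subset.antisymm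
  · intro g hg
    have : g ∈ Qmod n d := by
      refine Submodule.span_le.mpr ?_ hg
      rintro v ⟨α, i, j, hα, hij, rfl⟩
      exact v_mem_Qmod α i j hα hij
    exact this
  · rintro g ⟨hhom, heval⟩
    have hpoly : ∑ i, (X i : MvPolynomial (Fin n) ℝ) * g i = 0 := by
      apply MvPolynomial.funext; intro x
      rw [map_sum, map_zero]
      simp only [map_mul, eval_X]
      exact heval x
    have hcoeff : ∀ β : Fin n →₀ ℕ,
        ∑ i, (if β i ≠ 0 then coeff (β - Finsupp.single i 1) (g i) else 0) = 0 := by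
      intro β
      have h := congrArg (coeff β) hpoly
      rw [coeff_zero, coeff_sum] at h
      refine Eq.trans (Finset.sum_congr rfl (fun i _ => ?_)) h
      rw [coeff_X_mul']
      simp [Finsupp.mem_support_iff]
    set T := Finset.univ.biUnion
      (fun i : Fin n => (g i).support.image (· + Finsupp.single i 1)) with hT
    have hdegT : ∀ β ∈ T, ∑ k, β k = d + 2 := by
      intro β hβ
      simp only [hT, Finset.mem_biUnion, Finset.mem_image, Finset.mem_univ, true_and] at hβ
      obtain ⟨i, γ, hγ, rfl⟩ := hβ
      have h1 : γ.degree = d + 1 := by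
        rw [Finsupp.degree_eq_weight_one]
        exact (hhom i) (mem_support_iff.mp hγ)
      rw [sum_add_single, ← fdeg_eq_sum, h1]
    have hdecomp : g = ∑ β ∈ T, (fun i =>
        (monomial (β - Finsupp.single i 1)
          (if β i ≠ 0 then coeff (β - Finsupp.single i 1) (g i) else 0)
          : MvPolynomial (Fin n) ℝ)) := by
      funext i
      rw [Finset.sum_apply]
      have step1 : ∀ β ∈ T, (monomial (β - Finsupp.single i 1)
          (if β i ≠ 0 then coeff (β - Finsupp.single i 1) (g i) else 0)
          : MvPolynomial (Fin n) ℝ)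
          = if β i ≠ 0 then monomial (β - Finsupp.single i 1)
              (coeff (β - Finsupp.single i 1) (g i)) else 0 := by
        intro β _
        split <;> simp
      rw [Finset.sum_congr rfl step1, ← Finset.sum_filter]
      have hinj : ∀ β ∈ T.filter (fun β => β i ≠ 0), ∀ β' ∈ T.filter (fun β => β i ≠ 0),
          β - Finsupp.single i 1 = β' - Finsupp.single i 1 → β = β' := by
        intro β hβ β' hβ' hEq
        have h1 := tsub_add_cancel_of_le (single_le_of_ne (Finset.mem_filter.mp hβ).2)
        have h2 := tsub_add_cancel_of_le (single_le_of_ne (Finset.mem_filter.mp hβ').2)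
        rw [← h1, ← h2, hEq]
      have himg : ∑ γ ∈ (T.filter (fun β => β i ≠ 0)).image (· - Finsupp.single i 1),
            (monomial γ (coeff γ (g i)) : MvPolynomial (Fin n) ℝ)
          = ∑ β' ∈ T.filter (fun β => β i ≠ 0),
            (monomial (β' - Finsupp.single i 1)
              (coeff (β' - Finsupp.single i 1) (g i)) : MvPolynomial (Fin n) ℝ) :=
        Finset.sum_image hinj
      rw [← himg]
      have hsub : (g i).support ⊆ (T.filter (fun β => β i ≠ 0)).image
          (· - Finsupp.single i 1) := by
        intro γ hγ
        refine Finset.mem_image.mpr ⟨γ + Finsupp.single i 1, ?_, ?_⟩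
        · refine Finset.mem_filter.mpr ⟨?_, ?_⟩
          · exact Finset.mem_biUnion.mpr ⟨i, Finset.mem_univ i,
              Finset.mem_image.mpr ⟨γ, hγ, rfl⟩⟩
          · simp [Finsupp.add_apply, Finsupp.single_eq_same]
        · exact add_tsub_cancel_right _ _
      rw [← Finset.sum_subset hsub (fun γ _ hγ => by
        rw [notMem_support_iff.mp hγ, map_zero])]
      exact (support_sum_monomial_coeff (g i)).symm
    rw [hdecomp]
    refine Submodule.sum_mem _ (fun β hβ => ?_)
    refine slice_mem_span β (hdegT β hβ) _ (fun i hi => ?_) (hcoeff β)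
    by_contra hzero
    exact hi (if_neg (by simpa using hzero))
end

section
/- Let d ≥ 0 and let g : ℝⁿ → ℝⁿ be a map whose components are polynomials of degree at most d+1 satisfying xᵀ g(x) = 0 for all x ∈ ℝⁿ. Then there exists a matrix-valued map A : ℝⁿ → ℝ^{n×n} whose entries are polynomials of degree at most d, with A(x)ᵀ = −A(x) for all x, such that g(x) = A(x) x for all x ∈ ℝⁿ. -/
open MvPolynomial Matrix

namespace SkewRepAux

variable {n : ℕ}

lemma degree_eq_sum (v : Fin n →₀ ℕ) : v.degree = ∑ j, v j := by
  rw [Finsupp.degree]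
  exact Finset.sum_subset (Finset.subset_univ _) (fun j _ hj =>
    Finsupp.notMem_support_iff.mp hj)

lemma degree_add (a b : Fin n →₀ ℕ) : (a + b).degree = a.degree + b.degree := by
  simp [degree_eq_sum, Finsupp.add_apply, Finset.sum_add_distrib]

lemma degree_single (s : Fin n) : (Finsupp.single s 1 : Fin n →₀ ℕ).degree = 1 := by
  simp [degree_eq_sum, Finsupp.single_apply]

lemma hc_X_mul (k : ℕ) (s : Fin n) (p : MvPolynomial (Fin n) ℝ) :
    homogeneousComponent (k + 1) (X s * p) = X s * homogeneousComponent k p := by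
  ext m
  rw [coeff_homogeneousComponent, coeff_X_mul', coeff_X_mul', coeff_homogeneousComponent]
  by_cases hs : s ∈ m.support
  · simp only [hs, if_true]
    have hle : Finsupp.single s 1 ≤ m := by
      rw [Finsupp.single_le_iff]
      exact Nat.one_le_iff_ne_zero.mpr (Finsupp.mem_support_iff.mp hs)
    have hm : (m - Finsupp.single s 1) + Finsupp.single s 1 = m :=
      tsub_add_cancel_of_le hle
    have hdm : m.degree = (m - Finsupp.single s 1).degree + 1 := by
      conv_lhs => rw [← hm]
      rw [degree_add, degree_single]
    by_cases hk : (m - Finsupp.single s 1).degree = k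
    · simp [hk, hdm]
    · have : m.degree ≠ k + 1 := by omega
      simp [hk, this]
  · simp only [hs, if_false, ite_self]

lemma euler_monomial (v : Fin n →₀ ℕ) (c : ℝ) :
    ∑ j, X j * pderiv j (monomial v c) = C (v.degree : ℝ) * monomial v c := by
  have h : ∀ j : Fin n, X j * pderiv j (monomial v c) = monomial v (c * (v j : ℝ)) := by
    intro j
    rw [pderiv_monomial, X, monomial_mul, one_mul]
    by_cases hj : v j = 0
    · simp [hj]
    · rw [add_tsub_cancel_of_le (Finsupp.single_le_iff.mpr (Nat.one_le_iff_ne_zero.mpr hj))]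
  rw [Finset.sum_congr rfl (fun j _ => h j), ← map_sum, ← Finset.mul_sum,
    degree_eq_sum]
  rw [C_mul_monomial, Nat.cast_sum, mul_comm]

lemma euler {p : MvPolynomial (Fin n) ℝ} {k : ℕ} (hp : p.IsHomogeneous k) :
    ∑ j, X j * pderiv j p = C (k : ℝ) * p := by
  conv_lhs => rw [p.as_sum]
  conv_rhs => rw [p.as_sum]
  simp_rw [map_sum, Finset.mul_sum]
  rw [Finset.sum_comm]
  refine Finset.sum_congr rfl fun v hv => ?_
  rw [euler_monomial]
  congr 2
  rw [Finsupp.degree_eq_weight_one]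
  exact congrArg _ (hp (Finsupp.mem_support_iff.mp hv))

lemma pderiv_isHomogeneous {p : MvPolynomial (Fin n) ℝ} {k : ℕ} (j : Fin n)
    (hp : p.IsHomogeneous (k + 1)) : (pderiv j p).IsHomogeneous k := by
  have : pderiv j p = ∑ v ∈ p.support, pderiv j (monomial v (coeff v p)) := by
    conv_lhs => rw [p.as_sum]
    rw [map_sum]
  rw [this]
  apply IsHomogeneous.sum
  intro v hv
  rw [pderiv_monomial]
  by_cases hj : v j = 0
  · simp only [hj, Nat.cast_zero, mul_zero, map_zero]
    exact isHomogeneous_zero _ _ _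
  · apply isHomogeneous_monomial
    have hvdeg : v.degree = k + 1 := by
      rw [Finsupp.degree_eq_weight_one]
      exact hp (Finsupp.mem_support_iff.mp hv)
    have hle : Finsupp.single j 1 ≤ v :=
      Finsupp.single_le_iff.mpr (Nat.one_le_iff_ne_zero.mpr hj)
    have hm : (v - Finsupp.single j 1) + Finsupp.single j 1 = v := tsub_add_cancel_of_le hle
    have := degree_add (v - Finsupp.single j 1) (Finsupp.single j 1)
    rw [hm, degree_single, hvdeg] at this
    omega

end SkewRepAux


open SkewRepAux


/-- **Proposition 1.**  If `g : ℝⁿ → ℝⁿ` has polynomial components of degree at most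
`d+1` and satisfies `xᵀ g(x) = 0` for all `x ∈ ℝⁿ`, then there is a skew-symmetric
polynomial matrix `A(x)` of degree at most `d` with `g(x) = A(x) x` for all `x ∈ ℝⁿ`. -/
theorem skew_representation_of_Q
    (n d : ℕ) (g : Fin n → MvPolynomial (Fin n) ℝ)
    (hdeg : ∀ i, (g i).totalDegree ≤ d + 1)
    (hzero : ∀ x : Fin n → ℝ, ∑ i, x i * eval x (g i) = 0) :
    ∃ A : Matrix (Fin n) (Fin n) (MvPolynomial (Fin n) ℝ),
      (∀ i j, (A i j).totalDegree ≤ d) ∧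
      (∀ x : Fin n → ℝ,
        (Matrix.of fun i j => eval x (A i j))ᵀ = -(Matrix.of fun i j => eval x (A i j))) ∧
      (∀ x : Fin n → ℝ, ∀ i, eval x (g i) = ∑ j, eval x (A i j) * x j) := by
  classical
  set H : ℕ → Fin n → MvPolynomial (Fin n) ℝ :=
    fun k i => homogeneousComponent k (g i) with hHdef
  -- the polynomial ∑ Xᵢ gᵢ vanishes identically
  have hP : (∑ i, X i * g i : MvPolynomial (Fin n) ℝ) = 0 := by
    apply MvPolynomial.funext
    intro x
    rw [map_sum, map_zero]
    simpa [eval_mul] using hzero x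
  -- each homogeneous layer of the relation vanishes
  have hHk : ∀ k, ∑ j, X j * H k j = 0 := by
    intro k
    have h1 : homogeneousComponent (k + 1) (∑ i, X i * g i) = 0 := by
      rw [hP, map_zero]
    rw [map_sum] at h1
    simpa only [hc_X_mul] using h1
  -- differentiating the layer relation
  have hstep : ∀ k i, H k i + ∑ j, X j * pderiv i (H k j) = 0 := by
    intro k i
    have h1 := congrArg (pderiv i) (hHk k)
    rw [map_sum, map_zero] at h1
    have h2 : ∀ j : Fin n, pderiv i (X j * H k j)
        = (if i = j then 1 else 0) * H k j + X j * pderiv i (H k j) := by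
      intro j
      rw [pderiv_mul, pderiv_X]
      by_cases h : i = j <;> simp [h, Pi.single_apply]
    rw [Finset.sum_congr rfl (fun j _ => h2 j)] at h1
    rw [Finset.sum_add_distrib] at h1
    simpa [ite_mul, Finset.sum_ite_eq] using h1
  have hstep' : ∀ k i, ∑ j, X j * pderiv i (H k j) = -(H k i) :=
    fun k i => eq_neg_of_add_eq_zero_right (hstep k i)
  -- the degree-0 layer vanishes
  have hH0 : ∀ i, H 0 i = 0 := by
    intro i
    have h := hstep 0 i
    have hz : ∀ j : Fin n, pderiv i (H 0 j) = 0 := by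
      intro j
      show pderiv i (homogeneousComponent 0 (g j)) = 0
      rw [homogeneousComponent_zero, pderiv_C]
    simpa [hz] using h
  -- Euler's identity for the layers
  have heuler : ∀ k i, ∑ j, X j * pderiv j (H k i) = C (k : ℝ) * H k i :=
    fun k i => euler (homogeneousComponent_isHomogeneous k (g i))
  -- the skew matrix
  set A : Matrix (Fin n) (Fin n) (MvPolynomial (Fin n) ℝ) :=
    fun i j => ∑ k ∈ Finset.range (d + 1),
      ((k + 2 : ℝ)⁻¹) • (pderiv j (H (k + 1) i) - pderiv i (H (k + 1) j)) with hAdef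
  have hskew : ∀ i j, A j i = -(A i j) := by
    intro i j
    rw [hAdef, ← Finset.sum_neg_distrib]
    exact Finset.sum_congr rfl fun k _ => by rw [← smul_neg, neg_sub]
  -- the representation identity at the polynomial level
  have hrep : ∀ i, ∑ j, A i j * X j = g i := by
    intro i
    have hlayer : ∀ k, k ∈ Finset.range (d + 1) →
        ∑ j, (((k + 2 : ℝ)⁻¹) • (pderiv j (H (k + 1) i) - pderiv i (H (k + 1) j))) * X j
          = H (k + 1) i := by
      intro k _
      have h1 : ∑ j, (pderiv j (H (k + 1) i) - pderiv i (H (k + 1) j)) * X j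
          = C ((k : ℝ) + 2) * H (k + 1) i := by
        have e1 := heuler (k + 1) i
        have e2 := hstep' (k + 1) i
        calc ∑ j, (pderiv j (H (k + 1) i) - pderiv i (H (k + 1) j)) * X j
            = ∑ j, (X j * pderiv j (H (k + 1) i)) - ∑ j, (X j * pderiv i (H (k + 1) j)) := by
              rw [← Finset.sum_sub_distrib]
              exact Finset.sum_congr rfl fun j _ => by ring
          _ = C ((k : ℝ) + 1) * H (k + 1) i + H (k + 1) i := by
              rw [e1, e2, sub_neg_eq_add, Nat.cast_add, Nat.cast_one]
          _ = C ((k : ℝ) + 2) * H (k + 1) i := by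
              have hC : (C ((k : ℝ) + 2) : MvPolynomial (Fin n) ℝ) = C ((k : ℝ) + 1) + 1 := by
                rw [← C_1, ← C_add]; congr 1; ring
              rw [hC]; ring
      calc ∑ j, (((k + 2 : ℝ)⁻¹) • (pderiv j (H (k + 1) i) - pderiv i (H (k + 1) j))) * X j
          = ((k + 2 : ℝ)⁻¹) • ∑ j, (pderiv j (H (k + 1) i) - pderiv i (H (k + 1) j)) * X j := by
            rw [Finset.smul_sum]
            exact Finset.sum_congr rfl fun j _ => smul_mul_assoc _ _ _
        _ = H (k + 1) i := by
            rw [h1, smul_eq_C_mul, ← mul_assoc, ← C_mul,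
              inv_mul_cancel₀ (by positivity : (k : ℝ) + 2 ≠ 0), C_1, one_mul]
    calc ∑ j, A i j * X j
        = ∑ k ∈ Finset.range (d + 1),
            ∑ j, (((k + 2 : ℝ)⁻¹) • (pderiv j (H (k + 1) i) - pderiv i (H (k + 1) j))) * X j := by
          rw [hAdef]
          simp_rw [Finset.sum_mul]
          exact Finset.sum_comm
      _ = ∑ k ∈ Finset.range (d + 1), H (k + 1) i := Finset.sum_congr rfl hlayer
      _ = ∑ k ∈ Finset.range (d + 2), H k i := by
          rw [Finset.sum_range_succ' (fun k => H k i)]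
          rw [hH0 i, add_zero]
      _ = g i := by
          rw [show ∑ k ∈ Finset.range (d + 2), H k i
              = ∑ k ∈ Finset.range (d + 2), homogeneousComponent k (g i) from rfl]
          rw [← Finset.sum_subset
            (Finset.range_subset_range.mpr (Nat.succ_le_succ (hdeg i)))
            (fun k _ hk => homogeneousComponent_eq_zero k (g i)
              (by rw [Finset.mem_range, not_lt] at hk
                  exact lt_of_lt_of_le (Nat.lt_succ_self _) hk))]
          exact sum_homogeneousComponent (g i)
  -- degree bound
  have hdegA : ∀ i j, (A i j).totalDegree ≤ d := by
    intro i j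
    rw [hAdef]
    apply totalDegree_finsetSum_le
    intro k hk
    refine (totalDegree_smul_le _ _).trans ?_
    have hhom : ((pderiv j (H (k + 1) i)) - pderiv i (H (k + 1) j)).IsHomogeneous k :=
      (pderiv_isHomogeneous j (homogeneousComponent_isHomogeneous (k + 1) (g i))).sub
        (pderiv_isHomogeneous i (homogeneousComponent_isHomogeneous (k + 1) (g j)))
    exact hhom.totalDegree_le.trans (by
      simp only [Finset.mem_range] at hk; omega)
  refine ⟨A, hdegA, ?_, ?_⟩
  · intro x
    ext i j
    show eval x (A j i) = -(eval x (A i j))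
    rw [hskew i j, map_neg]
  · intro x i
    rw [← hrep i, map_sum]
    exact Finset.sum_congr rfl fun j _ => by rw [eval_mul, eval_X]
end

section
/- Let d ≥ 0 and let g : ℝⁿ → ℝⁿ be a map whose components are polynomials of degree at most d+1 with no constant term, satisfying xᵀ g(x) = 0 for all x in the affine hyperplane H = {x ∈ ℝⁿ : Σᵢ xᵢ = 1}. Then there exists a scalar polynomial s in x₁,…,xₙ of degree at most d+1 such that xᵀ g(x) = (1 − xᵀ𝟏) s(x) for all x ∈ ℝⁿ; moreover, s contains neither a constant term nor any linear term. -/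
open MvPolynomial

lemma my_eval_smul_of_isHomogeneous {σ : Type*} {p : MvPolynomial σ ℝ} {k : ℕ}
    (hp : p.IsHomogeneous k) (t : ℝ) (y : σ → ℝ) :
    eval (t • y) p = t ^ k * eval y p := by
  classical
  conv_lhs => rw [p.as_sum]
  conv_rhs => rw [p.as_sum]
  rw [map_sum, map_sum, Finset.mul_sum]
  apply Finset.sum_congr rfl
  intro d hd
  rw [eval_monomial, eval_monomial]
  have hdeg : d.degree = k := by
    have := hp (MvPolynomial.mem_support_iff.mp hd)
    rwa [Finsupp.degree_eq_weight_one]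
  have : (d.prod fun i e => ((t • y) i) ^ e) = t ^ k * d.prod fun i e => (y i) ^ e := by
    rw [Finsupp.prod, Finsupp.prod]
    simp only [Pi.smul_apply, smul_eq_mul, mul_pow]
    rw [Finset.prod_mul_distrib, Finset.prod_pow_eq_pow_sum]
    rw [← Finsupp.degree_apply, hdeg]
  rw [this]; ring

/-- **Lemma 4 (factorization).**  If `g` has polynomial components of degree at most
`d+1` with no constant term and `xᵀ g(x) = 0` on the hyperplane `{x : ∑ᵢ xᵢ = 1}`,
then `xᵀ g(x) = (1 − xᵀ𝟏) s(x)` for a scalar polynomial `s` of degree at most `d+1`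
containing neither a constant nor a linear term. -/
theorem factor_out_one_minus_sum
    (n d : ℕ) (g : Fin n → MvPolynomial (Fin n) ℝ)
    (hdeg : ∀ i, (g i).totalDegree ≤ d + 1)
    (hconst : ∀ i, coeff 0 (g i) = 0)
    (hzero : ∀ x : Fin n → ℝ, ∑ i, x i = 1 → ∑ i, x i * eval x (g i) = 0) :
    ∃ s : MvPolynomial (Fin n) ℝ,
      s.totalDegree ≤ d + 1 ∧
      (∀ x : Fin n → ℝ, ∑ i, x i * eval x (g i) = (1 - ∑ i, x i) * eval x s) ∧
      coeff 0 s = 0 ∧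
      (∀ α : Fin n →₀ ℕ, (∑ k, α k) = 1 → coeff α s = 0) := by
  classical
  rcases Nat.eq_zero_or_pos n with hn | hn
  · subst hn
    exact ⟨0, by simp, by simp, by simp, by simp⟩
  set u : MvPolynomial (Fin n) ℝ := ∑ i, X i with hu
  set P : MvPolynomial (Fin n) ℝ := ∑ i, X i * g i with hP
  set N := d + 2 with hN
  -- degree bound on P
  have hPdeg : P.totalDegree ≤ N := by
    apply (totalDegree_finset_sum _ _).trans
    apply Finset.sup_le
    intro i _
    calc (X i * g i).totalDegree ≤ (X i).totalDegree + (g i).totalDegree := totalDegree_mul _ _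
      _ ≤ 1 + (d + 1) := by
          gcongr
          · exact (totalDegree_X i).le
          · exact hdeg i
      _ = N := by omega
  set c : ℕ → MvPolynomial (Fin n) ℝ := fun k => homogeneousComponent k P with hc
  have hsum : ∑ k ∈ Finset.range (N + 1), c k = P := by
    rw [← sum_homogeneousComponent P]
    symm
    apply Finset.sum_subset
    · intro k hk
      simp only [Finset.mem_range] at *
      omega
    · intro k _ hk
      simp only [Finset.mem_range, not_lt] at hk
      have hlt : P.totalDegree < k := by omega
      exact homogeneousComponent_eq_zero _ P hlt
  set s : MvPolynomial (Fin n) ℝ :=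
    ∑ k ∈ Finset.range (N + 1), c k * (∑ j ∈ Finset.range (N - k), u ^ j) with hs
  set S : MvPolynomial (Fin n) ℝ :=
    ∑ k ∈ Finset.range (N + 1), c k * u ^ (N - k) with hSdef
  -- key polynomial identity
  have key : P = (1 - u) * s + S := by
    rw [hs, hSdef, Finset.mul_sum, ← Finset.sum_add_distrib, ← hsum]
    apply Finset.sum_congr rfl
    intro k _
    have hgeo : (1 - u) * (∑ j ∈ Finset.range (N - k), u ^ j) = 1 - u ^ (N - k) := by
      have := geom_sum_mul u (N - k)
      linear_combination -this
    calc c k = c k * ((1 - u ^ (N - k)) + u ^ (N - k)) := by ring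
      _ = (1 - u) * (c k * ∑ j ∈ Finset.range (N - k), u ^ j) + c k * u ^ (N - k) := by
          rw [← hgeo]; ring
  -- S vanishes as a polynomial
  have hSeval : ∀ x : Fin n → ℝ, (∑ i, x i) ≠ 0 → eval x S = 0 := by
    intro x hx
    set t : ℝ := ∑ i, x i with ht
    set y : Fin n → ℝ := t⁻¹ • x with hy
    have hxy : x = t • y := by rw [hy, smul_inv_smul₀ hx]
    have hyP : eval y P = 0 := by
      have hy1 : ∑ i, y i = 1 := by
        simp only [hy, Pi.smul_apply, smul_eq_mul, ← Finset.mul_sum, ← ht]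
        field_simp
      have := hzero y hy1
      rw [hP]
      simpa using this
    have hevalu : eval x u = t := by simp [hu, ht]
    rw [hSdef, map_sum]
    have hterm : ∀ k ∈ Finset.range (N + 1),
        eval x (c k * u ^ (N - k)) = t ^ N * eval y (c k) := by
      intro k hk
      simp only [Finset.mem_range] at hk
      rw [map_mul, map_pow, hevalu]
      have hck : eval x (c k) = t ^ k * eval y (c k) := by
        rw [hxy]
        exact my_eval_smul_of_isHomogeneous (homogeneousComponent_isHomogeneous k P) t y
      rw [hck]
      have : t ^ k * t ^ (N - k) = t ^ N := by
        rw [← pow_add]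
        congr 1
        omega
      linear_combination eval y (c k) * this
    rw [Finset.sum_congr rfl hterm, ← Finset.mul_sum]
    have : ∑ k ∈ Finset.range (N + 1), eval y (c k) = eval y P := by
      rw [← hsum, map_sum]
    rw [this, hyP, mul_zero]
  have hSzero : S = 0 := by
    have huS : u * S = 0 := by
      apply MvPolynomial.funext
      intro x
      rw [map_mul, map_zero]
      by_cases hx : (∑ i, x i) = 0
      · have : eval x u = 0 := by simp [hu, hx]
        rw [this, zero_mul]
      · rw [hSeval x hx, mul_zero]
    have hune : u ≠ 0 := by
      intro h
      have : eval (fun _ => (1:ℝ)) u = 0 := by rw [h, map_zero]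
      simp only [hu, map_sum, eval_X, Finset.sum_const, Finset.card_univ, Fintype.card_fin,
        nsmul_eq_mul, mul_one] at this
      exact_mod_cast absurd this (by positivity)
    rcases mul_eq_zero.mp huS with h | h
    · exact absurd h hune
    · exact h
  have keyfact : P = (1 - u) * s := by rw [key, hSzero, add_zero]
  -- degree sum conversion
  have hdegsum : ∀ β : Fin n →₀ ℕ, β.degree = ∑ i, β i := by
    intro β
    rw [Finsupp.degree_apply]
    apply Finset.sum_subset (Finset.subset_univ _)
    intro i _ hi
    exact Finsupp.notMem_support_iff.mp hi
  -- low-degree coefficients of P vanish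
  have hPlow : ∀ β : Fin n →₀ ℕ, β.degree ≤ 1 → coeff β P = 0 := by
    intro β hβ
    rw [hP, coeff_sum]
    apply Finset.sum_eq_zero
    intro i _
    rw [coeff_X_mul']
    split_ifs with hi
    · have hβi : 1 ≤ β i := Nat.one_le_iff_ne_zero.mpr (Finsupp.mem_support_iff.mp hi)
      have hzero' : β - Finsupp.single i 1 = 0 := by
        ext j
        simp only [Finsupp.coe_tsub, Pi.sub_apply, Finsupp.coe_zero, Pi.zero_apply]
        rw [hdegsum] at hβ
        by_cases hji : j = i
        · subst hji
          have hle : β j ≤ 1 := (Finsupp.le_degree j β).trans (le_of_eq_of_le (hdegsum β) hβ)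
          rw [Finsupp.single_eq_same]
          omega
        · have h1 : ∑ k, β k = β i + ∑ k ∈ Finset.univ.erase i, β k := by
            rw [Finset.add_sum_erase _ _ (Finset.mem_univ i)]
          have h2 : β j ≤ ∑ k ∈ Finset.univ.erase i, β k :=
            Finset.single_le_sum (fun _ _ => Nat.zero_le _)
              (Finset.mem_erase.mpr ⟨hji, Finset.mem_univ j⟩)
          have h3 : Finsupp.single i 1 j = 0 := by
            rw [Finsupp.single_apply, if_neg (fun h : i = j => hji h.symm)]
          rw [h3]
          omega
      rw [hzero', hconst i]
    · rfl
  -- low homogeneous components of P vanish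
  have hclow : ∀ k ≤ 1, c k = 0 := by
    intro k hk
    apply homogeneousComponent_eq_zero'
    intro β hβ hdk
    exact (MvPolynomial.mem_support_iff.mp hβ) (hPlow β (by omega))
  -- degree of u
  have hudeg : u.totalDegree ≤ 1 := by
    rw [hu]
    apply (totalDegree_finset_sum _ _).trans
    apply Finset.sup_le
    intro i _
    exact (totalDegree_X i).le
  -- degree bound on s
  have hsdeg : s.totalDegree ≤ d + 1 := by
    rw [hs]
    apply (totalDegree_finset_sum _ _).trans
    apply Finset.sup_le
    intro k hk
    simp only [Finset.mem_range] at hk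
    by_cases hkN : N ≤ k
    · have : N - k = 0 := by omega
      simp [this]
    · push_neg at hkN
      apply (totalDegree_mul _ _).trans
      have h1 : (c k).totalDegree ≤ k :=
        (homogeneousComponent_isHomogeneous k P).totalDegree_le
      have h2 : (∑ j ∈ Finset.range (N - k), u ^ j).totalDegree ≤ N - k - 1 := by
        apply (totalDegree_finset_sum _ _).trans
        apply Finset.sup_le
        intro j hj
        simp only [Finset.mem_range] at hj
        calc (u ^ j).totalDegree ≤ j * u.totalDegree := totalDegree_pow _ _
          _ ≤ j * 1 := by gcongr
          _ ≤ N - k - 1 := by omega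
      omega
  -- low-degree coefficients of s vanish
  have hslow : ∀ α : Fin n →₀ ℕ, α.degree ≤ 1 → coeff α s = 0 := by
    intro α hα
    rw [hs, coeff_sum]
    apply Finset.sum_eq_zero
    intro k hk
    rcases Nat.lt_or_ge k 2 with hk2 | hk2
    · rw [hclow k (by omega), zero_mul, coeff_zero]
    · rw [coeff_mul]
      apply Finset.sum_eq_zero
      intro z hz
      have hzz := Finset.HasAntidiagonal.mem_antidiagonal.mp hz
      have hd1 : z.1.degree ≤ 1 := by
        have hle : z.1.degree ≤ α.degree := by
          rw [hdegsum, hdegsum]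
          apply Finset.sum_le_sum
          intro i _
          calc z.1 i ≤ z.1 i + z.2 i := Nat.le_add_right _ _
            _ = α i := by rw [← hzz]; rfl
        omega
      have hcz : coeff z.1 (c k) = 0 :=
        (homogeneousComponent_isHomogeneous k P).coeff_eq_zero (by omega)
      rw [hcz, zero_mul]
  refine ⟨s, hsdeg, ?_, ?_, ?_⟩
  · intro x
    have hx := congrArg (eval x) keyfact
    rw [map_mul, map_sub, map_one] at hx
    have hP' : eval x P = ∑ i, x i * eval x (g i) := by simp [hP]
    have hu' : eval x u = ∑ i, x i := by simp [hu]
    rw [hP', hu'] at hx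
    exact hx
  · exact hslow 0 (by simp [map_zero])
  · intro α hα
    exact hslow α (by rw [hdegsum]; omega)
end

section
/- Let H ∈ ℝ^{n×n} be a constant matrix and define φ(H)(x) = diag(x)(Hx − (xᵀHx)𝟏). Then φ(H)(x) = 0 for every x ∈ ℝⁿ with xᵀ𝟏 = 1 if and only if there exists a vector v ∈ ℝⁿ such that H = 𝟏 vᵀ. -/
open Matrix

/-- **Appendix A (nullspace of `φ`).**  For a constant matrix `H`, the replicator
vector field `φ(H)(x) = diag(x)(Hx − (xᵀHx)𝟏)` vanishes for every `x` with
`xᵀ𝟏 = 1` if and only if `H = 𝟏 vᵀ` for some vector `v`. -/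
theorem nullspace_of_phi
    (n : ℕ) (H : Matrix (Fin n) (Fin n) ℝ) :
    (∀ x : Fin n → ℝ, ∑ i, x i = 1 →
      ∀ i, x i * ((H *ᵥ x) i - x ⬝ᵥ (H *ᵥ x)) = 0)
    ↔ ∃ v : Fin n → ℝ, H = vecMulVec (fun _ => 1) v := by
  constructor
  · intro h
    refine ⟨fun j => H j j, ?_⟩
    ext i j
    simp only [vecMulVec_apply, one_mul]
    by_cases hij : i = j
    · rw [hij]
    · have key : ∀ a b : ℝ, a + b = 1 → a ≠ 0 → b ≠ 0 →
          a * H i i + b * H i j = a * H j i + b * H j j := by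
        intro a b hab ha hb
        set x : Fin n → ℝ := fun k => (if k = i then a else 0) + (if k = j then b else 0)
          with hx
        have hsum : ∑ k, x k = 1 := by
          simp [hx, Finset.sum_add_distrib, hab]
        have hxi : x i = a := by simp [hx, hij]
        have hxj : x j = b := by simp [hx, Ne.symm hij]
        have hHx : ∀ k, (H *ᵥ x) k = a * H k i + b * H k j := by
          intro k
          simp [hx, mulVec, dotProduct, mul_add, mul_ite, Finset.sum_add_distrib,
            mul_comm]
        have h1 := h x hsum i
        have h2 := h x hsum j
        rw [hxi] at h1
        rw [hxj] at h2
        have e1 : (H *ᵥ x) i = x ⬝ᵥ (H *ᵥ x) := by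
          rcases mul_eq_zero.1 h1 with h' | h'
          · exact absurd h' ha
          · linarith
        have e2 : (H *ᵥ x) j = x ⬝ᵥ (H *ᵥ x) := by
          rcases mul_eq_zero.1 h2 with h' | h'
          · exact absurd h' hb
          · linarith
        have e3 : (H *ᵥ x) i = (H *ᵥ x) j := e1.trans e2.symm
        rw [hHx i, hHx j] at e3
        exact e3
      have k1 := key (1/2) (1/2) (by norm_num) (by norm_num) (by norm_num)
      have k2 := key (1/3) (2/3) (by norm_num) (by norm_num) (by norm_num)
      linarith
  · rintro ⟨v, rfl⟩
    intro x hx i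
    have hv : ∀ k : Fin n, (vecMulVec (fun _ => (1:ℝ)) v *ᵥ x) k = v ⬝ᵥ x := by
      intro k
      simp [vecMulVec, mulVec, dotProduct]
    have hd : x ⬝ᵥ (vecMulVec (fun _ => (1:ℝ)) v *ᵥ x) = v ⬝ᵥ x := by
      simp only [dotProduct, hv]
      rw [← Finset.sum_mul, hx, one_mul]
    rw [hv i, hd]
    ring
end

section
/- Let H, H' ∈ ℝ^{n×n} be constant matrices and define φ(M)(x) = diag(x)(Mx − (xᵀMx)𝟏) for a constant matrix M. Then φ(H)(x) = φ(H')(x) for all x ∈ ℝⁿ with xᵀ𝟏 = 1 if and only if there exists v ∈ ℝⁿ such that H = H' + 𝟏 vᵀ. -/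
open Matrix

private lemma sumx {n : ℕ} (i j : Fin n) (hij : i ≠ j) (a b : ℝ) (f : Fin n → ℝ) :
    ∑ k, f k * (if k = i then a else if k = j then b else 0) = f i * a + f j * b := by
  have key : ∀ k, f k * (if k = i then a else if k = j then b else 0)
      = (if k = i then f i * a else 0) + (if k = j then f j * b else 0) := by
    intro k
    by_cases h1 : k = i
    · subst h1; simp [hij]
    · by_cases h2 : k = j
      · subst h2; simp [h1, Ne.symm hij]
      · simp [h1, h2]
  simp [key, Finset.sum_add_distrib]

/-- Two constant payoff matrices `H` and `H'` induce the same replicator vector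
field `φ(M)(x) = diag(x)(Mx − (xᵀMx)𝟏)` on the hyperplane `{x : xᵀ𝟏 = 1}` if and
only if `H = H' + 𝟏 vᵀ` for some vector `v`. -/
theorem phi_eq_iff_shift_by_ones
    (n : ℕ) (H H' : Matrix (Fin n) (Fin n) ℝ) :
    (∀ x : Fin n → ℝ, ∑ i, x i = 1 →
      ∀ i, x i * ((H *ᵥ x) i - x ⬝ᵥ (H *ᵥ x))
         = x i * ((H' *ᵥ x) i - x ⬝ᵥ (H' *ᵥ x)))
    ↔ ∃ v : Fin n → ℝ, H = H' + vecMulVec (fun _ => 1) v := by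
  constructor
  · intro h
    refine ⟨fun j => H j j - H' j j, ?_⟩
    ext i j
    simp only [Matrix.add_apply, vecMulVec_apply, one_mul]
    by_cases hij : i = j
    · subst hij; ring
    · -- test vectors x_a = a e_i + (1-a) e_j
      have hx : ∀ a : ℝ, ∑ k, (if k = i then a else if k = j then (1-a) else 0) = 1 := by
        intro a
        have := sumx i j hij a (1-a) (fun _ => (1:ℝ))
        simpa using this
      have key : ∀ a : ℝ,
          ∀ l, (if l = i then a else if l = j then (1-a) else 0) *
              ((H *ᵥ (fun k => if k = i then a else if k = j then (1-a) else 0)) l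
                - (fun k => if k = i then a else if k = j then (1-a) else 0) ⬝ᵥ
                  (H *ᵥ (fun k => if k = i then a else if k = j then (1-a) else 0)))
            = (if l = i then a else if l = j then (1-a) else 0) *
              ((H' *ᵥ (fun k => if k = i then a else if k = j then (1-a) else 0)) l
                - (fun k => if k = i then a else if k = j then (1-a) else 0) ⬝ᵥ
                  (H' *ᵥ (fun k => if k = i then a else if k = j then (1-a) else 0))) := by
        intro a
        exact h _ (hx a)
      have expand : ∀ (M : Matrix (Fin n) (Fin n) ℝ) (a : ℝ) (l : Fin n),
          (M *ᵥ (fun k => if k = i then a else if k = j then (1-a) else 0)) l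
            = M l i * a + M l j * (1-a) := by
        intro M a l
        simp only [mulVec, dotProduct]
        exact sumx i j hij a (1-a) (fun k => M l k)
      have expand2 : ∀ (M : Matrix (Fin n) (Fin n) ℝ) (a : ℝ),
          (fun k => if k = i then a else if k = j then (1-a) else 0) ⬝ᵥ
            (M *ᵥ (fun k => if k = i then a else if k = j then (1-a) else 0))
          = (M i i * a + M i j * (1-a)) * a + (M j i * a + M j j * (1-a)) * (1-a) := by
        intro M a
        rw [dotProduct_comm]
        simp only [dotProduct]
        rw [sumx i j hij a (1-a) _]
        rw [expand, expand]
      have e1i := key (1/2) i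
      have e1j := key (1/2) j
      have e2i := key (1/3) i
      have e2j := key (1/3) j
      simp only [expand, expand2, if_pos rfl, if_neg hij, if_neg (Ne.symm hij)] at e1i e1j e2i e2j
      norm_num at e1i e1j e2i e2j
      linarith [e1i, e1j, e2i, e2j]
  · rintro ⟨v, rfl⟩
    intro x hx i
    have h1 : (vecMulVec (fun _ : Fin n => (1:ℝ)) v *ᵥ x) = fun _ => v ⬝ᵥ x := by
      funext k
      simp [vecMulVec, mulVec, dotProduct]
    have h2 : x ⬝ᵥ (fun _ : Fin n => v ⬝ᵥ x) = v ⬝ᵥ x := by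
      simp only [dotProduct]
      rw [← Finset.sum_mul, hx, one_mul]
    simp only [add_mulVec, h1, Pi.add_apply, dotProduct_add, h2]
    ring
end

section
/- Let d ≥ 1 and let M : ℝⁿ → ℝ^{n×n} be an arbitrary matrix-valued map with polynomial entries of degree at most d−1 (not necessarily symmetric). Then there exists a matrix-valued map B : ℝⁿ → ℝ^{n×n} with polynomial entries of degree at most d satisfying B(x)ᵀ = −B(x) for all x, such that M(x)x − (xᵀ M(x) x) 𝟏 = B(x) x for all x in the affine hyperplane {x ∈ ℝⁿ : Σᵢ xᵢ = 1}. -/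
open MvPolynomial Matrix

/-- **Appendix B (strengthened Lemma 7).**  For an arbitrary (not necessarily
symmetric) polynomial matrix `M(x)` of degree at most `d−1`, there exists a
skew-symmetric polynomial matrix `B(x)` of degree at most `d` such that
`M(x)x − (xᵀ M(x) x) 𝟏 = B(x) x` for all `x` in the hyperplane `{x : ∑ᵢ xᵢ = 1}`. -/
theorem strengthened_h_eq_B_mul_x
    (n d : ℕ) (hd : 1 ≤ d)
    (M : Matrix (Fin n) (Fin n) (MvPolynomial (Fin n) ℝ))
    (hdeg : ∀ i j, (M i j).totalDegree ≤ d - 1) :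
    ∃ B : Matrix (Fin n) (Fin n) (MvPolynomial (Fin n) ℝ),
      (∀ i j, B j i = - B i j) ∧
      (∀ i j, (B i j).totalDegree ≤ d) ∧
      (∀ x : Fin n → ℝ, ∑ i, x i = 1 →
        ∀ i, (∑ j, eval x (M i j) * x j) - ∑ i', ∑ j, x i' * eval x (M i' j) * x j
          = ∑ j, eval x (B i j) * x j) := by
  set a : Fin n → MvPolynomial (Fin n) ℝ := fun i => ∑ k, M i k * X k with ha
  have hadeg : ∀ i, (a i).totalDegree ≤ d := by
    intro i
    refine le_trans (totalDegree_finset_sum _ _) ?_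
    refine Finset.sup_le fun k _ => ?_
    calc (M i k * X k).totalDegree ≤ (M i k).totalDegree + (X k : MvPolynomial (Fin n) ℝ).totalDegree :=
          totalDegree_mul _ _
      _ ≤ (d - 1) + 1 := by
          have := hdeg i k
          simp [totalDegree_X]
          omega
      _ = d := by omega
  refine ⟨fun i j => a i - a j, ?_, ?_, ?_⟩
  · intro i j; ring
  · intro i j
    refine le_trans (totalDegree_sub _ _) ?_
    exact max_le (hadeg i) (hadeg j)
  · intro x hx i
    have haev : ∀ i, eval x (a i) = ∑ k, eval x (M i k) * x k := by
      intro i; simp [ha]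
    simp only [haev, map_sub]
    simp only [sub_mul]
    rw [Finset.sum_sub_distrib]
    have h1 : ∑ j, (∑ k, eval x (M i k) * x k) * x j = ∑ k, eval x (M i k) * x k := by
      rw [← Finset.mul_sum, hx, mul_one]
    rw [h1]
    congr 1
    refine Finset.sum_congr rfl fun j _ => ?_
    rw [Finset.sum_mul]
    refine Finset.sum_congr rfl fun k _ => ?_
    ring
end

section
/- Let n = 3 and define g : ℝ³ → ℝ³ by g(x) = (−x₁² + x₁x₂ + x₁, −2x₁², −x₁²). Then xᵀ g(x) = 0 for all x with x₁ + x₂ + x₃ = 1, yet there is no constant matrix H ∈ ℝ^{3×3} such that g(x) = Hx − (xᵀHx)𝟏 for all x in the hyperplane {x ∈ ℝ³ : x₁ + x₂ + x₃ = 1}. -/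
open Matrix

/-- **Example 2 (counterexample).**  For `n = 3`, the vector field
`g(x) = (−x₁² + x₁x₂ + x₁, −2x₁², −x₁²)` satisfies `xᵀ g(x) = 0` on the hyperplane
`{x : x₁ + x₂ + x₃ = 1}`, yet no constant matrix `H ∈ ℝ^{3×3}` satisfies
`g(x) = Hx − (xᵀHx)𝟏` on that hyperplane. -/
theorem counterexample_no_constant_H
    (g : (Fin 3 → ℝ) → Fin 3 → ℝ)
    (hg : ∀ x, g x = ![-(x 0) ^ 2 + x 0 * x 1 + x 0, -2 * (x 0) ^ 2, -(x 0) ^ 2]) :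
    (∀ x : Fin 3 → ℝ, x 0 + x 1 + x 2 = 1 → ∑ i, x i * g x i = 0) ∧
    ¬ ∃ H : Matrix (Fin 3) (Fin 3) ℝ,
        ∀ x : Fin 3 → ℝ, x 0 + x 1 + x 2 = 1 →
          ∀ i, g x i = (H *ᵥ x) i - x ⬝ᵥ (H *ᵥ x) := by
  constructor
  · intro x hx
    rw [hg]
    simp [Fin.sum_univ_three]
    nlinarith [sq_nonneg (x 0)]
  · rintro ⟨H, hH⟩
    have p1 := hH ![0, 0, 1] (by show (0:ℝ) + 0 + 1 = 1; norm_num)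
    have p2 := hH ![1, 0, 0] (by show (1:ℝ) + 0 + 0 = 1; norm_num)
    have p3 := hH ![2, 0, -1] (by show (2:ℝ) + 0 + -1 = 1; norm_num)
    have e10 := p1 0
    have e11 := p1 1
    have e20 := p2 0
    have e21 := p2 1
    have e30 := p3 0
    have e31 := p3 1
    simp [hg, mulVec, dotProduct, Fin.sum_univ_three] at e10 e11 e20 e21 e30 e31
    linarith
end
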